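/- Let B be the 6×6 integer matrix with rows (0,-2,6,-4,6,-2), (2,0,-14,6,-16,6), (-6,14,0,10,6,-4), (4,-6,-10,0,-14,6), (-6,16,-6,14,0,-2), (2,-6,4,-6,2,0). Let v_1 = (1,-3,2,-3,1,0)ᵀ and v_2 = (0,1,-3,2,-3,1)ᵀ. Then B = 2(v_2 v_1ᵀ - v_1 v_2ᵀ); in particular B has rank 2, and the four vectors u_1 = (1,0,-1,0,1,0)ᵀ, u_2 = (0,1,0,-1,0,1)ᵀ, u_3 = (3,1,0,0,0,-1)ᵀ, u_4 = (-1,0,0,0,1,3)ᵀ lie in the kernel of B. -/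
import Mathlib


open Matrix

lemma cons_val_five' {α : Type*} (a : α) (u : Fin 5 → α) :
    Matrix.vecCons a u (5 : Fin 6) = u 4 := rfl

/-- The degenerate exchange matrix `B` of the sixth-order recurrence
`x_{n+6}x_n = x_{n+5}²x_{n+3}⁴x_{n+1}² + (x_{n+4}x_{n+2})⁶` equals
`2(v₂v₁ᵀ - v₁v₂ᵀ)` for `v₁ = (1,-3,2,-3,1,0)ᵀ`, `v₂ = (0,1,-3,2,-3,1)ᵀ`;
in particular it has rank 2, and the four vectors `u₁ = (1,0,-1,0,1,0)ᵀ`,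
`u₂ = (0,1,0,-1,0,1)ᵀ`, `u₃ = (3,1,0,0,0,-1)ᵀ`, `u₄ = (-1,0,0,0,1,3)ᵀ`
lie in its kernel. -/
theorem sixth_order_exchange_matrix_structure :
    let B : Matrix (Fin 6) (Fin 6) ℤ :=
      !![0, -2, 6, -4, 6, -2;
         2, 0, -14, 6, -16, 6;
         -6, 14, 0, 10, 6, -4;
         4, -6, -10, 0, -14, 6;
         -6, 16, -6, 14, 0, -2;
         2, -6, 4, -6, 2, 0]
    let v1 : Fin 6 → ℤ := ![1, -3, 2, -3, 1, 0]
    let v2 : Fin 6 → ℤ := ![0, 1, -3, 2, -3, 1]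
    B = 2 • (vecMulVec v2 v1 - vecMulVec v1 v2) ∧
      B.rank = 2 ∧
      B.mulVec ![1, 0, -1, 0, 1, 0] = 0 ∧
      B.mulVec ![0, 1, 0, -1, 0, 1] = 0 ∧
      B.mulVec ![3, 1, 0, 0, 0, -1] = 0 ∧
      B.mulVec ![-1, 0, 0, 0, 1, 3] = 0 := by
  intro B v1 v2
  open Module Submodule in
  have key : ∀ x : Fin 6 → ℤ,
      B.mulVec x = (-(2 * (v2 ⬝ᵥ x))) • v1 + (2 * (v1 ⬝ᵥ x)) • v2 := by
    intro x; ext i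
    fin_cases i <;>
      simp [B, v1, v2, mulVec, dotProduct, Fin.sum_univ_six, cons_val_five'] <;> ring
  refine ⟨by decide, ?_, by decide, by decide, by decide, by decide⟩
  open Module Submodule in
  apply le_antisymm
  · have hsub : LinearMap.range B.mulVecLin ≤ span ℤ (Set.range ![v1, v2]) := by
      rintro _ ⟨x, rfl⟩
      rw [mulVecLin_apply, key x]
      exact add_mem (smul_mem _ _ (subset_span ⟨0, rfl⟩))
        (smul_mem _ _ (subset_span ⟨1, rfl⟩))
    haveI : Module.Finite ℤ (span ℤ (Set.range ![v1, v2])) :=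
      Module.Finite.span_of_finite ℤ (Set.finite_range _)
    exact (Submodule.finrank_mono hsub).trans
      ((finrank_range_le_card ![v1, v2]).trans (by simp))
  · have hc0 : B.mulVec (Pi.single (0 : Fin 6) 1) = ![0, 2, -6, 4, -6, 2] := by decide
    have hc1 : B.mulVec (Pi.single (1 : Fin 6) 1) = ![-2, 0, 14, -6, 16, -6] := by decide
    have li : LinearIndependent ℤ
        ![(![0, 2, -6, 4, -6, 2] : Fin 6 → ℤ), ![-2, 0, 14, -6, 16, -6]] := by
      rw [LinearIndependent.pair_iff]
      intro s t hst
      have h0 := congrFun hst 0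
      have h1 := congrFun hst 1
      simp only [Pi.add_apply, Pi.smul_apply, Matrix.cons_val_zero, Matrix.cons_val_one,
        Matrix.head_cons, smul_eq_mul, Pi.zero_apply] at h0 h1
      omega
    have hsub : span ℤ (Set.range
        ![(![0, 2, -6, 4, -6, 2] : Fin 6 → ℤ), ![-2, 0, 14, -6, 16, -6]])
        ≤ LinearMap.range B.mulVecLin := by
      rw [span_le]
      rintro _ ⟨i, rfl⟩
      fin_cases i
      · exact ⟨Pi.single 0 1, hc0⟩
      · exact ⟨Pi.single 1 1, hc1⟩
    haveI : Module.Finite ℤ (LinearMap.range B.mulVecLin) :=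
      Module.Finite.iff_fg.mpr (IsNoetherian.noetherian _)
    have := Submodule.finrank_mono hsub
    rwa [finrank_span_eq_card li, Fintype.card_fin] at this
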